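/- Fix N ≥ 1 and work in MonoidAlgebra ℚ (FreeMonoid (Fin N)) equipped with the bilinear operation ≺ defined on basis words by the max-letter rule. For any two nonempty packed words u and v, M_u ≺ M_v = Σ_w M_w, where the sum ranges over all packed words w of length |u| + |v| such that the prefix of w of length |u| packs to u, the suffix of w of length |v| packs to v, and the greatest letter of w occurs only among the first |u| positions of w. Hence the span of the M_u is closed under ≺. -/

import Mathlib

/-- The rank of the letter `x` in the word `w`: one plus the number of distinct letters
of `w` smaller than `x`. -/
def rank (w : List ℕ) (x : ℕ) : ℕ := ((w.filter (· < x)).dedup).length + 1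

/-- The packed word of a word `w`: if the distinct letters occurring in `w` are
`b₁ < b₂ < … < b_k`, each occurrence of `b_j` is replaced by `j`. -/
def pack (w : List ℕ) : List ℕ := w.map (rank w)

/-- For a packed word `u`, the element `M_u` of `MonoidAlgebra ℚ (FreeMonoid (Fin N))`:
the sum of all words `w` over the alphabet `Fin N` (identified with `{1 < 2 < … < N}`)
whose packed word is `u`. -/
noncomputable def Mword (N : ℕ) (u : List ℕ) : MonoidAlgebra ℚ (FreeMonoid (Fin N)) :=
  ∑ f : Fin u.length → Fin N,
    if pack ((List.ofFn f).map (fun i => (i : ℕ) + 1)) = u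
    then MonoidAlgebra.single (FreeMonoid.ofList (List.ofFn f)) (1 : ℚ) else 0

/-- The (finite) set of all packed words of length `n`; a packed word of length `n`
has all its letters in `{1, …, n}`. -/
noncomputable def packedWords (n : ℕ) : Finset (List ℕ) :=
  ((Finset.univ : Finset (Fin n → Fin (n + 1))).image
    (fun f => (List.ofFn f).map (fun i : Fin (n + 1) => (i : ℕ)))).filter (fun w => pack w = w)

/-- The right operation `≻` of the Loday–Ronco dendriform trialgebra structure on
noncommutative polynomials: on basis words, `u ≻ v = uv` if `u, v` are nonempty and
`max u < max v`, and `0` otherwise; extended bilinearly. -/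
noncomputable def trSucc {α : Type*} [LinearOrder α]
    (x y : MonoidAlgebra ℚ (FreeMonoid α)) : MonoidAlgebra ℚ (FreeMonoid α) :=
  x.coeff.sum fun u a => y.coeff.sum fun v b =>
    if u.toList ≠ [] ∧ v.toList ≠ [] ∧ u.toList.maximum < v.toList.maximum
    then MonoidAlgebra.single (u * v) (a * b) else 0

/-- The middle operation `∘`: on basis words, `u ∘ v = uv` if `u, v` are nonempty and
`max u = max v`, and `0` otherwise; extended bilinearly. -/
noncomputable def trCirc {α : Type*} [LinearOrder α]
    (x y : MonoidAlgebra ℚ (FreeMonoid α)) : MonoidAlgebra ℚ (FreeMonoid α) :=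
  x.coeff.sum fun u a => y.coeff.sum fun v b =>
    if u.toList ≠ [] ∧ v.toList ≠ [] ∧ u.toList.maximum = v.toList.maximum
    then MonoidAlgebra.single (u * v) (a * b) else 0

/-- The left operation `≺`: on basis words, `u ≺ v = uv` if `u, v` are nonempty and
`max u > max v`, and `0` otherwise; extended bilinearly. -/
noncomputable def trPrec {α : Type*} [LinearOrder α]
    (x y : MonoidAlgebra ℚ (FreeMonoid α)) : MonoidAlgebra ℚ (FreeMonoid α) :=
  x.coeff.sum fun u a => y.coeff.sum fun v b =>
    if u.toList ≠ [] ∧ v.toList ≠ [] ∧ v.toList.maximum < u.toList.maximum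
    then MonoidAlgebra.single (u * v) (a * b) else 0


namespace Aux

theorem le_foldrMax {l : List ℕ} {x : ℕ} (h : x ∈ l) : x ≤ l.foldr max 0 := by
  induction l with
  | nil => simp at h
  | cons a t ih =>
    rcases List.mem_cons.1 h with rfl | h
    · exact le_max_left _ _
    · exact le_trans (ih h) (le_max_right _ _)

theorem foldrMax_mem {l : List ℕ} (h : l ≠ []) : l.foldr max 0 ∈ l := by
  induction l with
  | nil => simp at h
  | cons a t ih =>
    rcases eq_or_ne t [] with rfl | ht
    · simp
    · rcases max_cases a (t.foldr max 0) with ⟨h1, _⟩ | ⟨h1, _⟩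
      · simp [h1]
      · rw [List.foldr_cons, h1]
        exact List.mem_cons_of_mem _ (ih ht)

theorem foldrMax_eq {l : List ℕ} {m : ℕ} (hm : m ∈ l) (hub : ∀ x ∈ l, x ≤ m) :
    l.foldr max 0 = m :=
  le_antisymm (hub _ (foldrMax_mem (List.ne_nil_of_mem hm))) (le_foldrMax hm)

theorem toFinset_map (l : List ℕ) (f : ℕ → ℕ) : (l.map f).toFinset = l.toFinset.image f := by
  ext x; simp [List.mem_map]

theorem rank_eq_card (w : List ℕ) (x : ℕ) :
    rank w x = (w.toFinset.filter (· < x)).card + 1 := by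
  rw [rank, ← List.card_toFinset, List.toFinset_filter]
  simp

theorem rank_le_rank (w : List ℕ) {x y : ℕ} (hxy : x ≤ y) : rank w x ≤ rank w y := by
  rw [rank_eq_card, rank_eq_card]
  have hsub : w.toFinset.filter (· < x) ⊆ w.toFinset.filter (· < y) := by
    intro a ha
    rw [Finset.mem_filter] at ha ⊢
    exact ⟨ha.1, lt_of_lt_of_le ha.2 hxy⟩
  exact Nat.add_le_add_right (Finset.card_le_card hsub) 1

theorem rank_lt_rank {w : List ℕ} {x y : ℕ} (hx : x ∈ w) (hxy : x < y) :
    rank w x < rank w y := by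
  rw [rank_eq_card, rank_eq_card]
  have hsub : w.toFinset.filter (· < x) ⊆ w.toFinset.filter (· < y) := by
    intro a ha
    rw [Finset.mem_filter] at ha ⊢
    exact ⟨ha.1, lt_trans ha.2 hxy⟩
  refine Nat.add_lt_add_right (Finset.card_lt_card ⟨hsub, fun hsub' => ?_⟩) 1
  have := hsub' (Finset.mem_filter.2 ⟨List.mem_toFinset.2 hx, hxy⟩)
  simp at this

theorem rank_lt_iff {w : List ℕ} {x y : ℕ} (hx : x ∈ w) (hy : y ∈ w) :
    rank w x < rank w y ↔ x < y := by
  constructor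
  · intro h
    by_contra hle
    exact absurd (rank_le_rank w (not_lt.1 hle)) (not_le.2 h)
  · exact rank_lt_rank hx

theorem rank_inj {w : List ℕ} {x y : ℕ} (hx : x ∈ w) (hy : y ∈ w) :
    rank w x = rank w y ↔ x = y := by
  constructor
  · intro h
    rcases lt_trichotomy x y with h' | h' | h'
    · exact absurd h (ne_of_lt (rank_lt_rank hx h'))
    · exact h'
    · exact absurd h.symm (ne_of_lt (rank_lt_rank hy h'))
  · rintro rfl; rfl

theorem rank_le_length {w : List ℕ} {x : ℕ} (hx : x ∈ w) : rank w x ≤ w.length := by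
  rw [rank_eq_card]
  have h1 : (w.toFinset.filter (· < x)).card < w.toFinset.card := by
    refine Finset.card_lt_card ⟨Finset.filter_subset _ _, fun hsub => ?_⟩
    have := hsub (List.mem_toFinset.2 hx)
    simp at this
  exact le_trans (Nat.succ_le_of_lt h1) (List.toFinset_card_le w)

end Aux

namespace Aux2
open Aux

theorem pack_map {w : List ℕ} {f : ℕ → ℕ}
    (hf : ∀ x ∈ w, ∀ y ∈ w, x ≤ y ↔ f x ≤ f y) : pack (w.map f) = pack w := by
  unfold pack
  rw [List.map_map]
  refine List.map_congr_left fun a ha => ?_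
  -- rank (w.map f) (f a) = rank w a
  have hinj : Set.InjOn f w.toFinset := by
    intro x hx y hy hxy
    rw [Finset.mem_coe, List.mem_toFinset] at hx hy
    exact le_antisymm ((hf x hx y hy).2 hxy.le) ((hf y hy x hx).2 hxy.ge)
  show rank (w.map f) (f a) = rank w a
  rw [rank_eq_card, rank_eq_card, toFinset_map, Finset.filter_image]
  congr 1
  rw [Finset.card_image_of_injOn (Set.InjOn.mono (by
    intro x hx
    exact Finset.mem_coe.2 (Finset.filter_subset _ _ (Finset.mem_coe.1 hx))) hinj)]
  congr 1
  refine Finset.filter_congr fun x hx => ?_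
  have hxw : x ∈ w := List.mem_toFinset.1 hx
  constructor
  · intro h
    by_contra h'
    exact absurd ((hf a ha x hxw).1 (not_lt.1 h')) (not_le.2 h)
  · intro h
    by_contra h'
    exact absurd ((hf a ha x hxw).2 (not_lt.1 h')) (not_le.2 h)

theorem pack_length (w : List ℕ) : (pack w).length = w.length := List.length_map _

theorem pack_pack (w : List ℕ) : pack (pack w) = pack w :=
  pack_map fun x hx y hy => ⟨fun h => rank_le_rank w h, fun h => by
    by_contra h'
    exact absurd h (not_le.2 (rank_lt_rank hy (not_le.1 h')))⟩

theorem pack_take (w : List ℕ) (k : ℕ) : pack ((pack w).take k) = pack (w.take k) := by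
  unfold pack
  rw [← List.map_take]
  exact pack_map fun x hx y hy => ⟨fun h => rank_le_rank w h, fun h => by
    by_contra h'
    exact absurd h (not_le.2 (rank_lt_rank (List.mem_of_mem_take hy) (not_le.1 h')))⟩

theorem pack_drop (w : List ℕ) (k : ℕ) : pack ((pack w).drop k) = pack (w.drop k) := by
  unfold pack
  rw [← List.map_drop]
  exact pack_map fun x hx y hy => ⟨fun h => rank_le_rank w h, fun h => by
    by_contra h'
    exact absurd h (not_le.2 (rank_lt_rank (List.mem_of_mem_drop hy) (not_le.1 h')))⟩

end Aux2

namespace Aux3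
open Aux Aux2

theorem length_of_mem_packedWords {n : ℕ} {w : List ℕ} (h : w ∈ packedWords n) :
    w.length = n := by
  rw [packedWords, Finset.mem_filter, Finset.mem_image] at h
  obtain ⟨⟨f, _, rfl⟩, _⟩ := h
  simp

theorem pack_of_mem_packedWords {n : ℕ} {w : List ℕ} (h : w ∈ packedWords n) :
    pack w = w := by
  rw [packedWords, Finset.mem_filter] at h
  exact h.2

theorem mem_packedWords {n : ℕ} {w : List ℕ} (hp : pack w = w) (hl : w.length = n)
    (hb : ∀ x ∈ w, x ≤ n) : w ∈ packedWords n := by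
  rw [packedWords, Finset.mem_filter, Finset.mem_image]
  refine ⟨⟨fun i => ⟨w.get (Fin.cast hl.symm i), ?_⟩, Finset.mem_univ _, ?_⟩, hp⟩
  · exact Nat.lt_succ_of_le (hb _ (List.get_mem w _))
  · rw [List.map_ofFn]
    refine List.ext_get (by simp [hl]) fun i h1 h2 => ?_
    rw [List.get_ofFn]
    rfl

theorem pack_mem_packedWords {w : List ℕ} {n : ℕ} (hl : w.length = n) :
    pack w ∈ packedWords n := by
  refine mem_packedWords (pack_pack w) (by rw [pack_length, hl]) fun x hx => ?_
  rw [pack] at hx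
  obtain ⟨y, hy, rfl⟩ := List.mem_map.1 hx
  exact le_trans (rank_le_length hy) hl.le

-- the max-position lemma
theorem foldrMax_pack_mem_drop_iff {a b : List ℕ} (ha : a ≠ []) (hb : b ≠ []) :
    (pack (a ++ b)).foldr max 0 ∈ (pack (a ++ b)).drop a.length ↔
      a.foldr max 0 ≤ b.foldr max 0 := by
  set w := a ++ b with hw
  have hX : w.foldr max 0 ∈ w := foldrMax_mem (by simp [hw, ha])
  have hub : ∀ x ∈ w, x ≤ w.foldr max 0 := fun x hx => le_foldrMax hx
  have hdrop : (pack w).drop a.length = b.map (rank w) := by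
    rw [pack, ← List.map_drop, hw, List.drop_left' rfl]
  have hmax : (pack w).foldr max 0 = rank w (w.foldr max 0) := by
    refine foldrMax_eq (List.mem_map.2 ⟨_, hX, rfl⟩) ?_
    intro x hx
    obtain ⟨y, hy, rfl⟩ := List.mem_map.1 hx
    exact rank_le_rank w (hub y hy)
  rw [hdrop, hmax]
  have hbsub : ∀ x ∈ b, x ∈ w := fun x hx => by simp [hw, hx]
  have hasub : ∀ x ∈ a, x ∈ w := fun x hx => by simp [hw, hx]
  have hamem : a.foldr max 0 ∈ w := hasub _ (foldrMax_mem ha)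
  have hbmem : b.foldr max 0 ∈ w := hbsub _ (foldrMax_mem hb)
  constructor
  · intro h
    obtain ⟨y, hy, hry⟩ := List.mem_map.1 h
    have hyw : y = w.foldr max 0 := (rank_inj (hbsub y hy) hX).1 hry
    calc a.foldr max 0 ≤ w.foldr max 0 := hub _ hamem
    _ = y := hyw.symm
    _ ≤ b.foldr max 0 := le_foldrMax hy
  · intro h
    have hXb : w.foldr max 0 ∈ b := by
      rcases List.mem_append.1 (hw ▸ hX) with hXa | hXb
      · have h1 : w.foldr max 0 ≤ b.foldr max 0 := le_trans (le_foldrMax hXa) h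
        have h2 : b.foldr max 0 ≤ w.foldr max 0 := hub _ hbmem
        rw [le_antisymm h1 h2]
        exact foldrMax_mem hb
      · exact hXb
    exact List.mem_map.2 ⟨_, hXb, rfl⟩
end Aux3

namespace Aux4
variable {α : Type*} [LinearOrder α]

theorem trPrec_add_left (x₁ x₂ y : MonoidAlgebra ℚ (FreeMonoid α)) :
    trPrec (x₁ + x₂) y = trPrec x₁ y + trPrec x₂ y := by
  unfold trPrec
  rw [MonoidAlgebra.coeff_add]
  refine Finsupp.sum_add_index' (fun u => ?_) (fun u a₁ a₂ => ?_)
  · simp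
  · rw [← Finsupp.sum_add]
    refine Finsupp.sum_congr fun v hv => ?_
    split_ifs with h
    · simp [add_mul, MonoidAlgebra.single_add]
    · rw [add_zero]

theorem trPrec_add_right (x y₁ y₂ : MonoidAlgebra ℚ (FreeMonoid α)) :
    trPrec x (y₁ + y₂) = trPrec x y₁ + trPrec x y₂ := by
  unfold trPrec
  rw [← Finsupp.sum_add]
  refine Finsupp.sum_congr fun u hu => ?_
  rw [MonoidAlgebra.coeff_add]
  refine Finsupp.sum_add_index' (fun v => ?_) (fun v b₁ b₂ => ?_)
  · simp
  · split_ifs with h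
    · simp [mul_add, MonoidAlgebra.single_add]
    · rw [add_zero]

theorem trPrec_zero_left (y : MonoidAlgebra ℚ (FreeMonoid α)) : trPrec 0 y = 0 := by
  unfold trPrec; exact Finsupp.sum_zero_index

theorem trPrec_zero_right (x : MonoidAlgebra ℚ (FreeMonoid α)) : trPrec x 0 = 0 := by
  unfold trPrec
  simp [Finsupp.sum_zero_index]

noncomputable def trPrecHom : MonoidAlgebra ℚ (FreeMonoid α) →+
    MonoidAlgebra ℚ (FreeMonoid α) →+ MonoidAlgebra ℚ (FreeMonoid α) :=
  AddMonoidHom.mk'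
    (fun x => AddMonoidHom.mk' (trPrec x) (trPrec_add_right x))
    (fun x₁ x₂ => AddMonoidHom.ext fun y => trPrec_add_left x₁ x₂ y)

theorem trPrec_sum_sum {ι κ : Type*} (s : Finset ι) (t : Finset κ)
    (x : ι → MonoidAlgebra ℚ (FreeMonoid α)) (y : κ → MonoidAlgebra ℚ (FreeMonoid α)) :
    trPrec (∑ i ∈ s, x i) (∑ j ∈ t, y j) = ∑ i ∈ s, ∑ j ∈ t, trPrec (x i) (y j) := by
  have h1 : trPrec (∑ i ∈ s, x i) (∑ j ∈ t, y j)
      = trPrecHom (∑ i ∈ s, x i) (∑ j ∈ t, y j) := rfl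
  rw [h1]
  calc trPrecHom (∑ i ∈ s, x i) (∑ j ∈ t, y j)
      = ∑ i ∈ s, trPrecHom (x i) (∑ j ∈ t, y j) := by
        rw [map_sum trPrecHom x s, AddMonoidHom.finset_sum_apply]
    _ = ∑ i ∈ s, ∑ j ∈ t, trPrecHom (x i) (y j) :=
        Finset.sum_congr rfl fun i _ => map_sum _ _ _

theorem trPrec_single_single (p q : FreeMonoid α) (c d : ℚ) :
    trPrec (MonoidAlgebra.single p c) (MonoidAlgebra.single q d) =
      if p.toList ≠ [] ∧ q.toList ≠ [] ∧ q.toList.maximum < p.toList.maximum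
      then MonoidAlgebra.single (p * q) (c * d) else 0 := by
  unfold trPrec
  rw [MonoidAlgebra.coeff_single, MonoidAlgebra.coeff_single]
  rw [Finsupp.sum_single_index, Finsupp.sum_single_index]
  · split_ifs with h
    · simp
    · rfl
  · rw [Finsupp.sum_single_index] <;> split_ifs with h <;>
      simp

end Aux4

namespace Aux5
open Aux Aux2 Aux3

theorem exists_max {N : ℕ} {l : List (Fin N)} (h : l ≠ []) :
    ∃ m : Fin N, l.maximum = ↑m ∧
      (l.map (fun i : Fin N => (i : ℕ) + 1)).foldr max 0 = (m : ℕ) + 1 := by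
  set l' := l.map (fun i : Fin N => (i : ℕ) + 1) with hl'
  have hne : l' ≠ [] := by simp [hl', h]
  have hmem : l'.foldr max 0 ∈ l' := foldrMax_mem hne
  obtain ⟨m, hm, hem⟩ := List.mem_map.1 hmem
  refine ⟨m, List.maximum_eq_coe_iff.2 ⟨hm, fun x hx => ?_⟩, hem.symm⟩
  have hx' : (x : ℕ) + 1 ≤ l'.foldr max 0 := le_foldrMax (List.mem_map.2 ⟨x, hx, rfl⟩)
  rw [← hem] at hx'
  exact Fin.le_def.2 (Nat.le_of_succ_le_succ hx')

theorem max_transfer {N : ℕ} {l₁ l₂ : List (Fin N)} (h₁ : l₁ ≠ []) (h₂ : l₂ ≠ []) :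
    l₂.maximum < l₁.maximum ↔
      (l₂.map (fun i : Fin N => (i : ℕ) + 1)).foldr max 0 <
        (l₁.map (fun i : Fin N => (i : ℕ) + 1)).foldr max 0 := by
  obtain ⟨m₁, hmax₁, hfold₁⟩ := exists_max h₁
  obtain ⟨m₂, hmax₂, hfold₂⟩ := exists_max h₂
  rw [hmax₁, hmax₂, hfold₁, hfold₂, WithBot.coe_lt_coe]
  exact ⟨fun h => Nat.succ_lt_succ (Fin.lt_def.1 h),
    fun h => Fin.lt_def.2 (Nat.lt_of_succ_lt_succ h)⟩

theorem key_iff {u v : List ℕ} (hu' : u ≠ []) (hv' : v ≠ [])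
    {a b : List ℕ} (hla : a.length = u.length) (hlb : b.length = v.length)
    (ha : a ≠ []) (hb : b ≠ []) :
    (pack a = u ∧ pack b = v ∧ b.foldr max 0 < a.foldr max 0) ↔
      pack (a ++ b) ∈ (packedWords (u.length + v.length)).filter
        (fun w => pack (w.take u.length) = u ∧ pack (w.drop u.length) = v ∧
          w.foldr max 0 ∉ w.drop u.length) := by
  rw [Finset.mem_filter]
  have htake : pack ((pack (a ++ b)).take u.length) = pack a := by
    rw [pack_take, ← hla, List.take_left' rfl]
  have hdrop : pack ((pack (a ++ b)).drop u.length) = pack b := by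
    rw [pack_drop, ← hla, List.drop_left' rfl]
  have hmem : pack (a ++ b) ∈ packedWords (u.length + v.length) :=
    pack_mem_packedWords (by rw [List.length_append, hla, hlb])
  have hmax := foldrMax_pack_mem_drop_iff ha hb
  rw [hla] at hmax
  constructor
  · rintro ⟨hpa, hpb, hm⟩
    exact ⟨hmem, htake.trans hpa, hdrop.trans hpb, fun hc => absurd (hmax.1 hc) (not_le.2 hm)⟩
  · rintro ⟨-, h1, h2, h3⟩
    exact ⟨htake.symm.trans h1, hdrop.symm.trans h2, not_le.1 fun hc => h3 (hmax.2 hc)⟩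

end Aux5

namespace Main
open Aux Aux2 Aux3 Aux4 Aux5

theorem coe_norm {N n : ℕ} (f : Fin n → Fin N) :
    ((List.ofFn f).map (fun i => (i : ℕ) + 1) : List ℕ)
      = (List.ofFn f).map (fun i : Fin N => (i : ℕ) + 1) := by
  have h : ∀ l : List (Fin N), (l.flatMap fun a => [(a : ℕ)]) = l.map (fun a : Fin N => (a : ℕ)) := by
    intro l; induction l with
    | nil => rfl
    | cons a t ih =>
      simp only [List.pure_def, List.bind_eq_flatMap, List.flatMap_singleton'] at ih ⊢
      simp [List.flatMap_cons, ih]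
  have h' := h (List.ofFn f)
  simp only [List.pure_def, List.bind_eq_flatMap, List.flatMap_singleton'] at h'
  simp only [List.pure_def, List.bind_eq_flatMap, h', List.map_map]
  rfl

theorem Mword_def' (N : ℕ) (w : List ℕ) :
    Mword N w = ∑ f : Fin w.length → Fin N,
      if pack ((List.ofFn f).map (fun i : Fin N => (i : ℕ) + 1)) = w
      then MonoidAlgebra.single (FreeMonoid.ofList (List.ofFn f)) (1 : ℚ) else 0 := by
  rw [Mword]
  exact Finset.sum_congr rfl fun f _ => by rw [coe_norm]

theorem Mword_eq_sum (N n : ℕ) (w : List ℕ) (h : w.length = n) :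
    Mword N w = ∑ f : Fin n → Fin N,
      if pack ((List.ofFn f).map (fun i : Fin N => (i : ℕ) + 1)) = w
      then MonoidAlgebra.single (FreeMonoid.ofList (List.ofFn f)) (1 : ℚ) else 0 := by
  subst h; exact Mword_def' N w

theorem sum_split {M : Type*} [AddCommMonoid M] {N m k : ℕ} (F : List (Fin N) → M) :
    ∑ h : Fin (m + k) → Fin N, F (List.ofFn h) =
      ∑ f : Fin m → Fin N, ∑ g : Fin k → Fin N, F (List.ofFn f ++ List.ofFn g) := by
  have step1 : ∑ h : Fin (m + k) → Fin N, F (List.ofFn h) =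
      ∑ h : Fin (m + k) → Fin N,
        F (List.ofFn (fun i => h (Fin.castAdd k i)) ++ List.ofFn (fun j => h (Fin.natAdd m j))) :=
    Finset.sum_congr rfl fun h _ => by rw [List.ofFn_add]; rfl
  rw [step1]
  rw [← Fintype.sum_equiv (Equiv.arrowCongr finSumFinEquiv (Equiv.refl (Fin N)))
    (fun j : Fin m ⊕ Fin k → Fin N => F (List.ofFn (fun i => j (Sum.inl i)) ++ List.ofFn (fun i => j (Sum.inr i))))
    (fun h : Fin (m + k) → Fin N =>
      F (List.ofFn (fun i => h (Fin.castAdd k i)) ++ List.ofFn (fun j => h (Fin.natAdd m j))))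
    (fun j => by
      have h1 : (fun i => Equiv.arrowCongr finSumFinEquiv (Equiv.refl (Fin N)) j (Fin.castAdd k i))
          = fun i => j (Sum.inl i) := by
        funext i
        simp [Equiv.arrowCongr, finSumFinEquiv_symm_apply_castAdd]
      have h2 : (fun i => Equiv.arrowCongr finSumFinEquiv (Equiv.refl (Fin N)) j (Fin.natAdd m i))
          = fun i => j (Sum.inr i) := by
        funext i
        simp [Equiv.arrowCongr, finSumFinEquiv_symm_apply_natAdd]
      show F ((List.ofFn fun i => j (Sum.inl i)) ++ List.ofFn fun i => j (Sum.inr i))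
          = F ((List.ofFn fun i => Equiv.arrowCongr finSumFinEquiv (Equiv.refl (Fin N)) j (Fin.castAdd k i))
            ++ List.ofFn fun i => Equiv.arrowCongr finSumFinEquiv (Equiv.refl (Fin N)) j (Fin.natAdd m i))
      rw [h1, h2])]
  rw [← Fintype.sum_equiv (Equiv.sumArrowEquivProdArrow (Fin m) (Fin k) (Fin N)).symm
    (fun p : (Fin m → Fin N) × (Fin k → Fin N) => F (List.ofFn p.1 ++ List.ofFn p.2))
    (fun j : Fin m ⊕ Fin k → Fin N =>
      F (List.ofFn (fun i => j (Sum.inl i)) ++ List.ofFn (fun i => j (Sum.inr i))))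
    (fun p => by
      show F (List.ofFn p.1 ++ List.ofFn p.2)
          = F ((List.ofFn fun i => (Equiv.sumArrowEquivProdArrow (Fin m) (Fin k) (Fin N)).symm p (Sum.inl i))
            ++ List.ofFn fun i => (Equiv.sumArrowEquivProdArrow (Fin m) (Fin k) (Fin N)).symm p (Sum.inr i))
      rfl)]
  rw [Fintype.sum_prod_type]


/-- Formula for the half-product `≺` on `NCQSym`: for nonempty packed words `u` and `v`,
`M_u ≺ M_v = Σ_w M_w`, where `w` ranges over all packed words of length `|u| + |v|` whose
prefix of length `|u|` packs to `u`, whose suffix of length `|v|` packs to `v`, and whose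
greatest letter occurs only among the first `|u|` positions. Hence the span of the `M_u`
is closed under `≺`. -/
theorem Mword_prec (N : ℕ) (hN : 1 ≤ N) (u v : List ℕ) (hu : pack u = u) (hv : pack v = v)
    (hu' : u ≠ []) (hv' : v ≠ []) :
    trPrec (Mword N u) (Mword N v) =
      ∑ w ∈ (packedWords (u.length + v.length)).filter
        (fun w => pack (w.take u.length) = u ∧ pack (w.drop u.length) = v ∧
          w.foldr max 0 ∉ w.drop u.length),
        Mword N w := by
  classical
  set S := (packedWords (u.length + v.length)).filter
      (fun w => pack (w.take u.length) = u ∧ pack (w.drop u.length) = v ∧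
        w.foldr max 0 ∉ w.drop u.length) with hS
  have lhs_eq : trPrec (Mword N u) (Mword N v)
      = ∑ f : Fin u.length → Fin N, ∑ g : Fin v.length → Fin N,
          (if pack ((List.ofFn f ++ List.ofFn g).map (fun i : Fin N => (i : ℕ) + 1)) ∈ S
           then MonoidAlgebra.single
             (FreeMonoid.ofList (List.ofFn f ++ List.ofFn g)) (1 : ℚ) else 0) := by
    rw [Mword_def', Mword_def', trPrec_sum_sum]
    refine Finset.sum_congr rfl fun f _ => Finset.sum_congr rfl fun g _ => ?_
    have hfne : List.ofFn f ≠ [] := fun h => hu' (by simpa using h)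
    have hgne : List.ofFn g ≠ [] := fun h => hv' (by simpa using h)
    have hane : (List.ofFn f).map (fun i : Fin N => (i : ℕ) + 1) ≠ [] :=
      fun h => hfne (List.map_eq_nil_iff.1 h)
    have hbne : (List.ofFn g).map (fun i : Fin N => (i : ℕ) + 1) ≠ [] :=
      fun h => hgne (List.map_eq_nil_iff.1 h)
    have hla : ((List.ofFn f).map (fun i : Fin N => (i : ℕ) + 1)).length = u.length := by simp
    have hlb : ((List.ofFn g).map (fun i : Fin N => (i : ℕ) + 1)).length = v.length := by simp
    have hkey := key_iff hu' hv' hla hlb hane hbne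
    rw [← hS, ← List.map_append] at hkey
    by_cases hP : pack ((List.ofFn f).map (fun i : Fin N => (i : ℕ) + 1)) = u
    · by_cases hQ : pack ((List.ofFn g).map (fun i : Fin N => (i : ℕ) + 1)) = v
      · rw [if_pos hP, if_pos hQ, trPrec_single_single]
        have hiff : (FreeMonoid.toList (FreeMonoid.ofList (List.ofFn f)) ≠ [] ∧
            FreeMonoid.toList (FreeMonoid.ofList (List.ofFn g)) ≠ [] ∧
            (FreeMonoid.toList (FreeMonoid.ofList (List.ofFn g))).maximum <
              (FreeMonoid.toList (FreeMonoid.ofList (List.ofFn f))).maximum) ↔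
            pack ((List.ofFn f ++ List.ofFn g).map (fun i : Fin N => (i : ℕ) + 1)) ∈ S := by
          rw [FreeMonoid.toList_ofList, FreeMonoid.toList_ofList]
          constructor
          · rintro ⟨-, -, hmax⟩
            exact hkey.1 ⟨hP, hQ, (max_transfer hfne hgne).1 hmax⟩
          · intro hmem
            exact ⟨hfne, hgne, (max_transfer hfne hgne).2 (hkey.2 hmem).2.2⟩
        by_cases hmem : pack ((List.ofFn f ++ List.ofFn g).map (fun i : Fin N => (i : ℕ) + 1)) ∈ S
        · rw [if_pos (hiff.2 hmem), if_pos hmem, one_mul]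
          rfl
        · rw [if_neg (fun hc => hmem (hiff.1 hc)), if_neg hmem]
      · rw [if_pos hP, if_neg hQ, trPrec_zero_right, if_neg]
        intro hmem
        exact hQ (hkey.2 hmem).2.1
    · rw [if_neg hP, trPrec_zero_left, if_neg]
      intro hmem
      exact hP (hkey.2 hmem).1
  have rhs_eq : (∑ w ∈ S, Mword N w)
      = ∑ h : Fin (u.length + v.length) → Fin N,
          (if pack ((List.ofFn h).map (fun i : Fin N => (i : ℕ) + 1)) ∈ S
           then MonoidAlgebra.single (FreeMonoid.ofList (List.ofFn h)) (1 : ℚ) else 0) := by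
    have hlen : ∀ w ∈ S, Mword N w = ∑ f : Fin (u.length + v.length) → Fin N,
        if pack ((List.ofFn f).map (fun i : Fin N => (i : ℕ) + 1)) = w
        then MonoidAlgebra.single (FreeMonoid.ofList (List.ofFn f)) (1 : ℚ) else 0 :=
      fun w hw => Mword_eq_sum N (u.length + v.length) w
        (length_of_mem_packedWords (Finset.mem_filter.1 hw).1)
    rw [Finset.sum_congr rfl hlen, Finset.sum_comm]
    refine Finset.sum_congr rfl fun h _ => ?_
    exact Finset.sum_ite_eq S (pack ((List.ofFn h).map (fun i : Fin N => (i : ℕ) + 1))) _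
  rw [lhs_eq, rhs_eq]
  exact (sum_split (fun l => if pack (l.map (fun i : Fin N => (i : ℕ) + 1)) ∈ S
    then MonoidAlgebra.single (FreeMonoid.ofList l) (1 : ℚ) else 0)).symm

end Main

theorem Mword_prec (N : ℕ) (hN : 1 ≤ N) (u v : List ℕ) (hu : pack u = u) (hv : pack v = v)
    (hu' : u ≠ []) (hv' : v ≠ []) :
    trPrec (Mword N u) (Mword N v) =
      ∑ w ∈ (packedWords (u.length + v.length)).filter
        (fun w => pack (w.take u.length) = u ∧ pack (w.drop u.length) = v ∧
          w.foldr max 0 ∉ w.drop u.length),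
        Mword N w :=
  Main.Mword_prec N hN u v hu hv hu' hv'
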